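/- Let TA = (L, L₀, L_u, Σ, CX, I, E) be a timed automaton. For every δ ∈ ℝ≥0 and all states (l,ν), (l',ν'): (l,ν) →δ (l',ν') is a delay transition in TS(TA) if and only if (l,ν) →δ (l',ν') is a delay transition in TS'(URG(TA)). -/

import Mathlib

/-!
Framework for timed automata.  Clock valuations assign non-negative reals to
clocks.  Guards and location invariants are represented semantically, as
predicates on clock valuations.
-/

/-- Clock valuations: each clock gets a non-negative real. -/
abbrev Val (C : Type) := C → NNReal

/-- The valuation `ν₀` assigning `0` to every clock. -/
def zeroVal {C : Type} : Val C := fun _ => 0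

open Classical in
/-- `ν[λ := 0]`: reset the clocks in `lam` to zero. -/
noncomputable def resetVal {C : Type} (ν : Val C) (lam : Set C) : Val C :=
  fun x => if x ∈ lam then 0 else ν x

/-- `ν + δ`: advance every clock by `δ`. -/
def shift {C : Type} (ν : Val C) (δ : NNReal) : Val C := fun x => ν x + δ

/-- A timed automaton `TA = (L, L₀, L_u, Σ, CX, I, E)` with location type `L`,
action alphabet `A` and clock type `C`:  a set of initial locations (nonempty),
a set of urgent locations, an invariant map, and a set of edges
`(l, a, φ, λ, l')` consisting of source, action, guard, reset set and target. -/
structure TA (L A C : Type) where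
  init : Set L
  init_nonempty : init.Nonempty
  urgent : Set L
  inv : L → Val C → Prop
  edges : Set (L × A × (Val C → Prop) × Set C × L)

/-- States of the associated transition systems: location/valuation pairs. -/
abbrev State (L C : Type) := L × Val C

/-- Initial states: initial locations paired with the zero valuation. -/
def TA.initStates {L A C : Type} (T : TA L A C) : Set (State L C) :=
  {p | p.1 ∈ T.init ∧ p.2 = zeroVal}

/-- Baseline semantics `TS(TA)`.  Labels are `Sum.inl a` for actions `a ∈ Σ`
and `Sum.inr δ` for delays `δ ∈ ℝ≥0`.  Action transitions require the target
invariant to hold; delay transitions require the source location not to be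
urgent and the invariant to hold throughout the delay. -/
def TS {L A C : Type} (T : TA L A C) :
    State L C → (A ⊕ NNReal) → State L C → Prop := fun p α q =>
  match α with
  | Sum.inl a => ∃ φ lam, (p.1, a, φ, lam, q.1) ∈ T.edges ∧ φ p.2 ∧
      q.2 = resetVal p.2 lam ∧ T.inv q.1 q.2
  | Sum.inr δ => p.1 ∉ T.urgent ∧ q.1 = p.1 ∧ q.2 = shift p.2 δ ∧
      ∀ k ≤ δ, T.inv p.1 (shift p.2 k)

/-- Unsatisfied-invariants semantics `TS'(TA)`: like `TS(TA)` except action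
transitions do not require the target invariant to hold. -/
def TS' {L A C : Type} (T : TA L A C) :
    State L C → (A ⊕ NNReal) → State L C → Prop := fun p α q =>
  match α with
  | Sum.inl a => ∃ φ lam, (p.1, a, φ, lam, q.1) ∈ T.edges ∧ φ p.2 ∧
      q.2 = resetVal p.2 lam
  | Sum.inr δ => p.1 ∉ T.urgent ∧ q.1 = p.1 ∧ q.2 = shift p.2 δ ∧
      ∀ k ≤ δ, T.inv p.1 (shift p.2 k)

/-- Reachable states: smallest set containing the initial states and closed
under the transition relation. -/
inductive Reachable {S Λ : Type} (init : Set S) (tr : S → Λ → S → Prop) : S → Prop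
  | base {s : S} : s ∈ init → Reachable init tr s
  | step {s : S} {α : Λ} {s' : S} :
      Reachable init tr s → tr s α s' → Reachable init tr s'

open Classical in
/-- The construction `URG(TA)`:  no urgent locations, invariant `false` on the
previously urgent locations, and each guard strengthened by
`resetPred(I(l'), λ)` (semantically: `I(l')(ν[λ:=0])`). -/
noncomputable def URG {L A C : Type} (T : TA L A C) : TA L A C where
  init := T.init
  init_nonempty := T.init_nonempty
  urgent := ∅
  inv := fun l ν => if l ∈ T.urgent then False else T.inv l ν
  edges := { e | ∃ l a φ lam l', (l, a, φ, lam, l') ∈ T.edges ∧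
      e = (l, a, fun ν => φ ν ∧ T.inv l' (resetVal ν lam), lam, l') }

/-- for every `δ ∈ ℝ≥0` and all states, `(l,ν) →δ (l',ν')` is a
delay transition in `TS(TA)` iff it is a delay transition in `TS'(URG(TA))`. -/
theorem statement_9 {L A C : Type} [Fintype L] [Fintype A] [Fintype C] [Nonempty C]
    (T : TA L A C) :
    ∀ (δ : NNReal) (l l' : L) (ν ν' : Val C),
      TS T (l, ν) (Sum.inr δ) (l', ν') ↔ TS' (URG T) (l, ν) (Sum.inr δ) (l', ν') := by
  intro δ l l' ν ν'
  simp only [TS, TS', URG]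
  constructor
  · rintro ⟨hu, hl, hv, hinv⟩
    refine ⟨by simp, hl, hv, fun k hk => ?_⟩
    simp [hu, hinv k hk]
  · rintro ⟨-, hl, hv, hinv⟩
    have h0 := hinv 0 zero_le
    have hu : l ∉ T.urgent := by by_contra h; simp [h] at h0
    exact ⟨hu, hl, hv, fun k hk => by have := hinv k hk; simpa [hu] using this⟩
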